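/- Let C be a container and let [w,h] ⪰ [w',h'] be regular sizes (w' | w as powers of q1, h' | h as powers of q2). Let R be the union of a subset R' of the remainder regions of C with respect to [w,h] that forms a rectangle. Then the quotient containers of size [w',h'] contained in R are exactly the union over R'' ∈ R' of the quotient containers of size [w',h'] contained in R''. In other words, no regular aligned region of size [w',h'] lies across the boundary between two remainder regions. -/

import Mathlib

/-- The half-open rectangular region `[x, x+w) × [y, y+h) ⊆ ℤ²`. -/
def Reg (x y w h : ℤ) : Set (ℤ × ℤ) :=
  Set.Ico x (x + w) ×ˢ Set.Ico y (y + h)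

/-- The set of quotient containers of size `[w,h]` contained in the set `C`:
all regular aligned regions `[x,x+w)×[y,y+h) ⊆ C` with `w ∣ x`, `h ∣ y`. -/
def QuoCon (C : Set (ℤ × ℤ)) (w h : ℤ) : Set (Set (ℤ × ℤ)) :=
  {S | ∃ x y : ℤ, S = Reg x y w h ∧ w ∣ x ∧ h ∣ y ∧ Reg x y w h ⊆ C}

/-- Least multiple of `w` that is `≥ x` (for `w > 0`). -/
def ceilMul (w x : ℤ) : ℤ := w * (-((-x) / w))

/-- Greatest multiple of `w` that is `≤ x` (for `w > 0`). -/
def floorMul (w x : ℤ) : ℤ := w * (x / w)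

/-- The (at most 8) remainder regions obtained by removing the union
`[xQ, xR) × [yQ, yR)` of the quotient containers of size `[w,h]` from the
container `[xC, xC+wC) × [yC, yC+hC)`.  If there are no quotient containers,
the whole container is the single remainder region. -/
def RemReg (xC yC wC hC w h : ℤ) : Set (Set (ℤ × ℤ)) :=
  let xQ := ceilMul w xC
  let xR := floorMul w (xC + wC)
  let yQ := ceilMul h yC
  let yR := floorMul h (yC + hC)
  if xQ < xR ∧ yQ < yR then
    { Reg xC yR (xQ - xC) (yC + hC - yR), Reg xQ yR (xR - xQ) (yC + hC - yR),
      Reg xR yR (xC + wC - xR) (yC + hC - yR),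
      Reg xC yQ (xQ - xC) (yR - yQ), Reg xR yQ (xC + wC - xR) (yR - yQ),
      Reg xC yC (xQ - xC) (yQ - yC), Reg xQ yC (xR - xQ) (yQ - yC),
      Reg xR yC (xC + wC - xR) (yQ - yC) }
  else { Reg xC yC wC hC }

lemma le_ceilMul (w x : ℤ) (hw : w ≠ 0) : x ≤ ceilMul w x := by
  have h1 := Int.mul_ediv_add_emod (-x) w
  have h2 := Int.emod_nonneg (-x) hw
  have h3 : ceilMul w x = -(w * ((-x) / w)) := by rw [ceilMul]; ring
  linarith [h1, h2, h3.ge, h3.le]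

lemma floorMul_le (w x : ℤ) (hw : w ≠ 0) : floorMul w x ≤ x := by
  have h1 := Int.mul_ediv_add_emod x w
  have h2 := Int.emod_nonneg x hw
  rw [floorMul]
  linarith

lemma dvd_ceilMul (w x : ℤ) : w ∣ ceilMul w x := dvd_mul_right _ _

lemma dvd_floorMul (w x : ℤ) : w ∣ floorMul w x := dvd_mul_right _ _

lemma side {d c x q : ℤ} (hx : d ∣ x) (hc : d ∣ c)
    (hq1 : x ≤ q) (hq2 : q < x + d) : (c ≤ x ↔ c ≤ q) := by
  constructor
  · intro hcx; omega
  · intro hcq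
    by_contra hcx
    push_neg at hcx
    have : d ≤ c - x := Int.le_of_dvd (by omega) (dvd_sub hc hx)
    omega

lemma remRegSubset {xC yC wC hC w h : ℤ} (hw : 0 < w) (hh : 0 < h)
    {T : Set (ℤ × ℤ)} (hT : T ∈ RemReg xC yC wC hC w h) :
    T ⊆ Reg xC yC wC hC := by
  have hx1 : xC ≤ ceilMul w xC := le_ceilMul w xC hw.ne'
  have hx2 : floorMul w (xC + wC) ≤ xC + wC := floorMul_le w _ hw.ne'
  have hy1 : yC ≤ ceilMul h yC := le_ceilMul h yC hh.ne'
  have hy2 : floorMul h (yC + hC) ≤ yC + hC := floorMul_le h _ hh.ne'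
  simp only [RemReg] at hT
  split_ifs at hT with hc
  · simp only [Set.mem_insert_iff, Set.mem_singleton_iff] at hT
    rcases hT with rfl|rfl|rfl|rfl|rfl|rfl|rfl|rfl <;>
      · rintro ⟨qx, qy⟩ hq
        simp only [Reg, Set.mem_prod, Set.mem_Ico] at hq ⊢
        omega
  · simp only [Set.mem_singleton_iff] at hT
    subst hT; exact le_refl _

lemma core {w h w' h' xC yC wC hC : ℤ} (hw'0 : 0 < w') (hh'0 : 0 < h')
    (hdw : w' ∣ w) (hdh : h' ∣ h)
    {x y : ℤ} (hdx : w' ∣ x) (hdy : h' ∣ y)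
    {R'' : Set (ℤ × ℤ)} (hmem : R'' ∈ RemReg xC yC wC hC w h)
    (hp : (x, y) ∈ R'')
    (hsubC : Reg x y w' h' ⊆ Reg xC yC wC hC) :
    Reg x y w' h' ⊆ R'' := by
  simp only [RemReg] at hmem
  split_ifs at hmem with hc
  · have hdxQ : w' ∣ ceilMul w xC := hdw.trans (dvd_ceilMul w xC)
    have hdxR : w' ∣ floorMul w (xC + wC) := hdw.trans (dvd_floorMul w _)
    have hdyQ : h' ∣ ceilMul h yC := hdh.trans (dvd_ceilMul h yC)
    have hdyR : h' ∣ floorMul h (yC + hC) := hdh.trans (dvd_floorMul h _)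
    simp only [Set.mem_insert_iff, Set.mem_singleton_iff] at hmem
    rintro ⟨qx, qy⟩ hq
    have hcont := hsubC hq
    simp only [Reg, Set.mem_prod, Set.mem_Ico] at hq hcont
    have h1 := side hdx hdxQ hq.1.1 hq.1.2
    have h2 := side hdx hdxR hq.1.1 hq.1.2
    have h3 := side hdy hdyQ hq.2.1 hq.2.2
    have h4 := side hdy hdyR hq.2.1 hq.2.2
    rcases hmem with rfl|rfl|rfl|rfl|rfl|rfl|rfl|rfl <;>
      · simp only [Reg, Set.mem_prod, Set.mem_Ico] at hp ⊢
        omega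
  · simp only [Set.mem_singleton_iff] at hmem
    subst hmem; exact hsubC

/-- if a subset `R'` of the remainder regions of `C` w.r.t. a regular
size `[w,h]` covers a rectangular space, then the quotient containers of a regular
size `[w',h'] ⪯ [w,h]` contained in that rectangle are exactly the union of the
quotient containers contained in the individual remainder regions: no regular
aligned region of size `[w',h']` lies across a boundary between remainder regions. -/
theorem stmt8 (q1 q2 : ℕ) (hq1 : 1 < q1) (hq2 : 1 < q2)
    (a a' b b' : ℕ) (w w' h h' : ℤ)
    (hw : w = (q1 : ℤ) ^ a) (hw' : w' = (q1 : ℤ) ^ a')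
    (hh : h = (q2 : ℤ) ^ b) (hh' : h' = (q2 : ℤ) ^ b')
    (hdomw : w' ≤ w) (hdomh : h' ≤ h)
    (xC yC wC hC : ℤ) (hwC : 0 < wC) (hhC : 0 < hC)
    (R' : Set (Set (ℤ × ℤ))) (hR' : R' ⊆ RemReg xC yC wC hC w h)
    (xR yR wR hR : ℤ) (hrect : ⋃₀ R' = Reg xR yR wR hR) :
    QuoCon (⋃₀ R') w' h' = ⋃ R'' ∈ R', QuoCon R'' w' h' := by
  have hq1z : (1 : ℤ) < q1 := by exact_mod_cast hq1
  have hq2z : (1 : ℤ) < q2 := by exact_mod_cast hq2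
  have hw0 : 0 < w := hw ▸ pow_pos (by omega) a
  have hh0 : 0 < h := hh ▸ pow_pos (by omega) b
  have hw'0 : 0 < w' := hw' ▸ pow_pos (by omega) a'
  have hh'0 : 0 < h' := hh' ▸ pow_pos (by omega) b'
  have haa : a' ≤ a := by
    rw [hw, hw'] at hdomw
    exact (pow_le_pow_iff_right₀ hq1z).mp hdomw
  have hbb : b' ≤ b := by
    rw [hh, hh'] at hdomh
    exact (pow_le_pow_iff_right₀ hq2z).mp hdomh
  have hdw : w' ∣ w := by rw [hw, hw']; exact pow_dvd_pow _ haa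
  have hdh : h' ∣ h := by rw [hh, hh']; exact pow_dvd_pow _ hbb
  have hsubC : ⋃₀ R' ⊆ Reg xC yC wC hC := by
    rintro p ⟨T, hT, hpT⟩
    exact remRegSubset hw0 hh0 (hR' hT) hpT
  ext S
  simp only [QuoCon, Set.mem_setOf_eq, Set.mem_iUnion, exists_prop]
  constructor
  · rintro ⟨x, y, rfl, hdx, hdy, hsub⟩
    have hxy : (x, y) ∈ Reg x y w' h' := by
      simp only [Reg, Set.mem_prod, Set.mem_Ico]
      omega
    obtain ⟨T, hT, hpT⟩ := hsub hxy
    exact ⟨T, hT, x, y, rfl, hdx, hdy,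
      core hw'0 hh'0 hdw hdh hdx hdy (hR' hT) hpT (hsub.trans hsubC)⟩
  · rintro ⟨T, hT, x, y, rfl, hdx, hdy, hsub⟩
    exact ⟨x, y, rfl, hdx, hdy, hsub.trans (Set.subset_sUnion_of_mem hT)⟩
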